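/- Fix τ ∈ ℂ with Im τ > 0 and set L = ℤ + τℤ. For all λ, μ ∈ ℂ with λ ∉ L, μ ∉ L, λ + μ ∉ L, and all z, w ∈ ℂ with z ∉ L, w ∉ L, z − w ∉ L, one has σ_λ(z)σ_μ(w) − σ_{λ+μ}(w)σ_λ(z−w) − σ_μ(w−z)σ_{λ+μ}(z) = 0. -/

import Mathlib

/-!
STATEMENT 17: The three-term identity
`σ_λ(z)σ_μ(w) − σ_{λ+μ}(w)σ_λ(z−w) − σ_μ(w−z)σ_{λ+μ}(z) = 0`
for the functions `σ_λ` built from Jacobi's theta function `θ₁`.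
-/

open Complex

/-- The lattice `L = ℤ + τℤ ⊆ ℂ`. -/
def lat (τ : ℂ) : Set ℂ := {w : ℂ | ∃ m n : ℤ, w = (m : ℂ) + (n : ℂ) * τ}

/-- Jacobi's theta function
`θ₁(z) = −Σ_{n∈ℤ} exp(2πi(z+1/2)(n+1/2) + πiτ(n+1/2)²)`. -/
noncomputable def theta1 (τ z : ℂ) : ℂ :=
  -∑' n : ℤ, Complex.exp (2 * (Real.pi : ℂ) * Complex.I * (z + 1 / 2) * ((n : ℂ) + 1 / 2)
      + (Real.pi : ℂ) * Complex.I * τ * ((n : ℂ) + 1 / 2) ^ 2)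

/-- The function `σ_λ(z) = θ₁(z−λ)θ₁′(0) / (θ₁(z)θ₁(−λ))`. -/
noncomputable def sigmaFn (τ lam z : ℂ) : ℂ :=
  theta1 τ (z - lam) * deriv (theta1 τ) 0 / (theta1 τ z * theta1 τ (-lam))

noncomputable section



namespace ThetaAux

/-- summand of `theta1` -/
def tt (τ z : ℂ) (n : ℤ) : ℂ :=
  -Complex.exp (2 * (Real.pi : ℂ) * Complex.I * (z + 1 / 2) * ((n : ℂ) + 1 / 2)
      + (Real.pi : ℂ) * Complex.I * τ * ((n : ℂ) + 1 / 2) ^ 2)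

lemma theta1_eq_tsum (τ z : ℂ) : theta1 τ z = ∑' n : ℤ, tt τ z n := by
  rw [theta1, ← tsum_neg]; rfl

lemma tt_eq (τ z : ℂ) (n : ℤ) :
    tt τ z n = -(Complex.exp ((Real.pi : ℂ) * Complex.I * (z + 1 / 2 + τ / 4)) *
      jacobiTheta₂_term n (z + 1 / 2 + τ / 2) τ) := by
  rw [tt, jacobiTheta₂_term, ← Complex.exp_add, neg_inj]
  congr 1
  ring

lemma theta1_eq_jacobi (τ z : ℂ) :
    theta1 τ z = -(Complex.exp ((Real.pi : ℂ) * Complex.I * (z + 1 / 2 + τ / 4)) *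
      jacobiTheta₂ (z + 1 / 2 + τ / 2) τ) := by
  rw [theta1_eq_tsum, jacobiTheta₂]
  calc ∑' n : ℤ, tt τ z n
      = ∑' n : ℤ, -(Complex.exp ((Real.pi : ℂ) * Complex.I * (z + 1 / 2 + τ / 4)) *
        jacobiTheta₂_term n (z + 1 / 2 + τ / 2) τ) := tsum_congr fun n => tt_eq τ z n
    _ = _ := by rw [tsum_neg, tsum_mul_left]

lemma summable_tt {τ : ℂ} (hτ : 0 < τ.im) (z : ℂ) : Summable (tt τ z) := by
  have := ((summable_jacobiTheta₂_term_iff (z + 1 / 2 + τ / 2) τ).mpr hτ).mul_left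
    (-(Complex.exp ((Real.pi : ℂ) * Complex.I * (z + 1 / 2 + τ / 4))))
  refine this.congr fun n => ?_
  rw [tt_eq]; ring

lemma summable_norm_jacobi {τ : ℂ} (hτ : 0 < τ.im) (w : ℂ) :
    Summable fun n : ℤ => ‖jacobiTheta₂_term n w τ‖ := by
  have hb := summable_pow_mul_jacobiTheta₂_term_bound |w.im| hτ 0
  refine Summable.of_nonneg_of_le (fun n => norm_nonneg _) (fun n => ?_)
    (hb.congr fun n => by rw [pow_zero, one_mul])
  exact norm_jacobiTheta₂_term_le hτ le_rfl le_rfl n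

lemma summable_norm_tt {τ : ℂ} (hτ : 0 < τ.im) (z : ℂ) :
    Summable fun n : ℤ => ‖tt τ z n‖ := by
  have := (summable_norm_jacobi hτ (z + 1 / 2 + τ / 2)).mul_left
    (‖Complex.exp ((Real.pi : ℂ) * Complex.I * (z + 1 / 2 + τ / 4))‖)
  refine this.congr fun n => ?_
  rw [tt_eq, norm_neg, norm_mul]

/-- exp congruence mod `2πi` -/
lemma cexp_eq_cexp (x y : ℂ) (n : ℤ) (h : x = y + n * (2 * Real.pi * Complex.I)) :
    Complex.exp x = Complex.exp y := by
  rw [h, Complex.exp_add, Complex.exp_int_mul_two_pi_mul_I, mul_one]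

lemma neg_cexp (x : ℂ) : -Complex.exp x = Complex.exp (x + Real.pi * Complex.I) := by
  rw [Complex.exp_add, Complex.exp_pi_mul_I, mul_neg_one]

lemma theta1_add_int (τ z : ℂ) (k : ℤ) :
    theta1 τ (z + k) = Complex.exp ((Real.pi : ℂ) * Complex.I * k) * theta1 τ z := by
  rw [theta1_eq_tsum, theta1_eq_tsum, ← tsum_mul_left]
  refine tsum_congr fun n => ?_
  rw [tt, tt, mul_neg, ← Complex.exp_add, neg_inj]
  refine cexp_eq_cexp _ _ (k * n) ?_
  push_cast
  ring

lemma theta1_add_int_mul (τ z : ℂ) (m : ℤ) :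
    theta1 τ (z + m * τ) =
      Complex.exp (-(Real.pi : ℂ) * Complex.I * (m ^ 2 * τ + 2 * m * z + m)) * theta1 τ z := by
  rw [theta1_eq_tsum, theta1_eq_tsum, ← tsum_mul_left,
    ← (Equiv.subRight (m : ℤ)).tsum_eq (fun n => tt τ (z + m * τ) n)]
  refine tsum_congr fun n => ?_
  rw [Equiv.subRight_apply, tt, tt, mul_neg, ← Complex.exp_add, neg_inj]
  refine cexp_eq_cexp _ _ 0 ?_
  push_cast
  ring

lemma theta1_neg (τ z : ℂ) : theta1 τ (-z) = -theta1 τ z := by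
  rw [theta1_eq_tsum, theta1_eq_tsum, ← tsum_neg,
    ← (Equiv.subLeft (-1 : ℤ)).tsum_eq (fun n => tt τ (-z) n)]
  refine tsum_congr fun n => ?_
  rw [Equiv.subLeft_apply, tt, tt, neg_neg, neg_cexp]
  refine cexp_eq_cexp _ _ (-n) ?_
  push_cast
  ring

lemma theta1_zero (τ : ℂ) : theta1 τ 0 = 0 := by
  have h := theta1_neg τ 0
  rw [neg_zero] at h
  linear_combination (1 / 2 : ℂ) * h

lemma theta1_T (τ z : ℂ) (k : ℤ) :
    theta1 (τ + k) z = Complex.exp ((Real.pi : ℂ) * Complex.I * k / 4) * theta1 τ z := by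
  rw [theta1_eq_tsum, theta1_eq_tsum, ← tsum_mul_left]
  refine tsum_congr fun n => ?_
  rw [tt, tt, mul_neg, ← Complex.exp_add, neg_inj]
  obtain ⟨t, ht⟩ : Even (k * (n * (n + 1))) := (Int.even_mul_succ_self n).mul_left k
  have hc : (k : ℂ) * (n * (n + 1)) = 2 * t := by exact_mod_cast by push_cast [ht]; ring
  refine cexp_eq_cexp _ _ t ?_
  linear_combination (Real.pi : ℂ) * Complex.I * hc



/-- even-index theta constituent series term -/
def Et (τ u : ℂ) (k : ℤ) : ℂ :=
  Complex.exp (4 * (Real.pi : ℂ) * Complex.I * k * u + 2 * (Real.pi : ℂ) * Complex.I * k ^ 2 * τ)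

/-- odd-index theta constituent series term -/
def Ot (τ u : ℂ) (k : ℤ) : ℂ :=
  Complex.exp (2 * (Real.pi : ℂ) * Complex.I * (2 * k + 1) * u
    + (Real.pi : ℂ) * Complex.I * (2 * k + 1) ^ 2 * τ / 2)

lemma Et_eq (τ u : ℂ) (k : ℤ) : Et τ u k = jacobiTheta₂_term k (2 * u) (2 * τ) := by
  rw [Et, jacobiTheta₂_term]; congr 1; ring

lemma Ot_eq (τ u : ℂ) (k : ℤ) :
    Ot τ u k = Complex.exp (2 * (Real.pi : ℂ) * Complex.I * u + (Real.pi : ℂ) * Complex.I * τ / 2)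
      * jacobiTheta₂_term k (2 * u + τ) (2 * τ) := by
  rw [Ot, jacobiTheta₂_term, ← Complex.exp_add]; congr 1; ring

lemma im_two_tau {τ : ℂ} (hτ : 0 < τ.im) : 0 < (2 * τ).im := by
  rw [Complex.mul_im]; norm_num; linarith

lemma summable_norm_Et {τ : ℂ} (hτ : 0 < τ.im) (u : ℂ) :
    Summable fun k : ℤ => ‖Et τ u k‖ := by
  refine ((summable_norm_jacobi (im_two_tau hτ) (2 * u))).congr fun k => ?_
  rw [Et_eq]

lemma summable_norm_Ot {τ : ℂ} (hτ : 0 < τ.im) (u : ℂ) :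
    Summable fun k : ℤ => ‖Ot τ u k‖ := by
  have := ((summable_norm_jacobi (im_two_tau hτ) (2 * u + τ))).mul_left
    (‖Complex.exp (2 * (Real.pi : ℂ) * Complex.I * u + (Real.pi : ℂ) * Complex.I * τ / 2)‖)
  refine this.congr fun k => ?_
  rw [Ot_eq, norm_mul]

/-- sum of even constituent -/
def Ef (τ u : ℂ) : ℂ := ∑' k : ℤ, Et τ u k
/-- sum of odd constituent -/
def Of (τ u : ℂ) : ℂ := ∑' k : ℤ, Ot τ u k

lemma key_even (τ u v : ℂ) (j k : ℤ) :
    tt τ (u + v) (j + k) * tt τ (u - v) (j - k) = -(Ot τ u j * Et τ v k) := by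
  rw [tt, tt, Ot, Et, neg_mul_neg, ← Complex.exp_add, ← Complex.exp_add, neg_cexp]
  refine cexp_eq_cexp _ _ j ?_
  push_cast
  ring

lemma key_odd (τ u v : ℂ) (j k : ℤ) :
    tt τ (u + v) (j + k) * tt τ (u - v) (j - k - 1) = Et τ u j * Ot τ v k := by
  rw [tt, tt, Et, Ot, neg_mul_neg, ← Complex.exp_add, ← Complex.exp_add]
  refine cexp_eq_cexp _ _ j ?_
  push_cast
  ring

/-- the even part of `ℤ × ℤ` -/
def sEven : Set (ℤ × ℤ) := {p | Even (p.1 + p.2)}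

def eE : (ℤ × ℤ) ≃ sEven :=
  Equiv.ofBijective (fun jk => ⟨(jk.1 + jk.2, jk.1 - jk.2), ⟨jk.1, by ring⟩⟩) (by
    constructor
    · intro p q h
      simp only [Subtype.mk.injEq, Prod.mk.injEq] at h
      obtain ⟨h1, h2⟩ : p.1 + p.2 = q.1 + q.2 ∧ p.1 - p.2 = q.1 - q.2 :=
        Prod.mk.inj (congrArg Subtype.val h)
      ext <;> omega
    · rintro ⟨⟨m, n⟩, ⟨t, ht⟩⟩
      refine ⟨(t, m - t), ?_⟩
      apply Subtype.ext
      simp only []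
      ext <;> simp <;> omega)

def eO : (ℤ × ℤ) ≃ (sEvenᶜ : Set (ℤ × ℤ)) :=
  Equiv.ofBijective (fun jk => ⟨(jk.1 + jk.2, jk.1 - jk.2 - 1), by
      rintro ⟨t, ht⟩; omega⟩) (by
    constructor
    · intro p q h
      simp only [Subtype.mk.injEq, Prod.mk.injEq] at h
      obtain ⟨h1, h2⟩ := h
      ext <;> omega
    · rintro ⟨⟨m, n⟩, hp⟩
      have hodd : ¬ Even (m + n) := hp
      rw [Int.not_even_iff_odd] at hodd
      obtain ⟨t, ht⟩ := hodd
      refine ⟨(t + 1, m - t - 1), ?_⟩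
      apply Subtype.ext
      simp only []
      ext <;> simp <;> omega)

lemma theta1_mul_theta1 {τ : ℂ} (hτ : 0 < τ.im) (u v : ℂ) :
    theta1 τ (u + v) * theta1 τ (u - v) = Ef τ u * Of τ v - Of τ u * Ef τ v := by
  have hnv := summable_norm_tt hτ (u + v)
  have hnw := summable_norm_tt hτ (u - v)
  have hT : Summable (fun p : ℤ × ℤ => tt τ (u + v) p.1 * tt τ (u - v) p.2) :=
    summable_mul_of_summable_norm hnv hnw
  rw [theta1_eq_tsum, theta1_eq_tsum, tsum_mul_tsum_of_summable_norm hnv hnw]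
  rw [← Summable.tsum_add_tsum_compl (s := sEven) (hT.subtype _) (hT.subtype _)]
  have hE : ∑' (p : sEven), tt τ (u + v) (p : ℤ × ℤ).1 * tt τ (u - v) (p : ℤ × ℤ).2
      = -(Of τ u * Ef τ v) := by
    rw [← eE.tsum_eq]
    have : ∀ jk : ℤ × ℤ, tt τ (u + v) ((eE jk : ℤ × ℤ)).1 * tt τ (u - v) ((eE jk : ℤ × ℤ)).2
        = -(Ot τ u jk.1 * Et τ v jk.2) := fun jk => key_even τ u v jk.1 jk.2
    rw [tsum_congr this, tsum_neg, Of, Ef,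
      tsum_mul_tsum_of_summable_norm (summable_norm_Ot hτ u) (summable_norm_Et hτ v)]
  have hO : ∑' (p : (sEvenᶜ : Set (ℤ × ℤ))), tt τ (u + v) (p : ℤ × ℤ).1 * tt τ (u - v) (p : ℤ × ℤ).2
      = Ef τ u * Of τ v := by
    rw [← eO.tsum_eq]
    have : ∀ jk : ℤ × ℤ, tt τ (u + v) ((eO jk : ℤ × ℤ)).1 * tt τ (u - v) ((eO jk : ℤ × ℤ)).2
        = Et τ u jk.1 * Ot τ v jk.2 := fun jk => key_odd τ u v jk.1 jk.2
    rw [tsum_congr this, Ef, Of,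
      tsum_mul_tsum_of_summable_norm (summable_norm_Et hτ u) (summable_norm_Ot hτ v)]
  rw [hE, hO]
  ring

lemma weier {τ : ℂ} (hτ : 0 < τ.im) (x y a b : ℂ) :
    (theta1 τ (x + y) * theta1 τ (x - y)) * (theta1 τ (a + b) * theta1 τ (a - b))
      = (theta1 τ (x + a) * theta1 τ (x - a)) * (theta1 τ (y + b) * theta1 τ (y - b))
        - (theta1 τ (x + b) * theta1 τ (x - b)) * (theta1 τ (y + a) * theta1 τ (y - a)) := by
  rw [theta1_mul_theta1 hτ x y, theta1_mul_theta1 hτ a b, theta1_mul_theta1 hτ x a,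
    theta1_mul_theta1 hτ y b, theta1_mul_theta1 hτ x b, theta1_mul_theta1 hτ y a]
  ring

lemma quartic {τ : ℂ} (hτ : 0 < τ.im) (z w l m : ℂ) :
    theta1 τ (z - l) * theta1 τ (z - w) * theta1 τ (w - m) * theta1 τ (l + m)
      = theta1 τ z * theta1 τ (z - w - l) * theta1 τ m * theta1 τ (w - l - m)
        + theta1 τ w * theta1 τ l * theta1 τ (z - l - m) * theta1 τ (z - w + m) := by
  have W := weier hτ ((z - l + w - m) / 2) ((z - l - w + m) / 2)
    ((l + m + z - w) / 2) ((l + m - z + w) / 2)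
  rw [show (z - l + w - m) / 2 + (z - l - w + m) / 2 = z - l by ring,
      show (z - l + w - m) / 2 - (z - l - w + m) / 2 = w - m by ring,
      show (l + m + z - w) / 2 + (l + m - z + w) / 2 = l + m by ring,
      show (l + m + z - w) / 2 - (l + m - z + w) / 2 = z - w by ring,
      show (z - l + w - m) / 2 + (l + m + z - w) / 2 = z by ring,
      show (z - l + w - m) / 2 - (l + m + z - w) / 2 = w - l - m by ring,
      show (z - l - w + m) / 2 + (l + m - z + w) / 2 = m by ring,
      show (z - l - w + m) / 2 - (l + m - z + w) / 2 = z - w - l by ring,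
      show (z - l + w - m) / 2 + (l + m - z + w) / 2 = w by ring,
      show (z - l + w - m) / 2 - (l + m - z + w) / 2 = z - l - m by ring,
      show (z - l - w + m) / 2 + (l + m + z - w) / 2 = z - w + m by ring,
      show (z - l - w + m) / 2 - (l + m + z - w) / 2 = -l by ring,
      theta1_neg] at W
  linear_combination W

/-! ### Strip estimates -/

/-- partial "Dirichlet kernel" polynomial -/
def Kf (z : ℂ) (n : ℕ) : ℂ :=
  1 + ∑ k ∈ Finset.range n,
    (Complex.exp (2 * (Real.pi : ℂ) * Complex.I * (k + 1) * z)
      + Complex.exp (-(2 * (Real.pi : ℂ) * Complex.I * (k + 1) * z)))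

lemma poly_fac (X Y : ℂ) (h : X * Y = 1) (n : ℕ) :
    X ^ (2 * n + 1) - Y ^ (2 * n + 1)
      = (X - Y) * (1 + ∑ k ∈ Finset.range n, (X ^ (2 * (k + 1)) + Y ^ (2 * (k + 1)))) := by
  induction n with
  | zero => simp
  | succ n ih =>
    rw [Finset.sum_range_succ]
    linear_combination ih + (X ^ (2 * n + 1) - Y ^ (2 * n + 1)) * h

lemma Kf_eq_pow (z : ℂ) (n : ℕ) :
    Complex.exp ((Real.pi : ℂ) * Complex.I * z) ^ (2 * n + 1)
      - Complex.exp (-((Real.pi : ℂ) * Complex.I * z)) ^ (2 * n + 1)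
      = (Complex.exp ((Real.pi : ℂ) * Complex.I * z)
          - Complex.exp (-((Real.pi : ℂ) * Complex.I * z))) * Kf z n := by
  have h : Complex.exp ((Real.pi : ℂ) * Complex.I * z)
      * Complex.exp (-((Real.pi : ℂ) * Complex.I * z)) = 1 := by
    rw [← Complex.exp_add]; simp
  rw [poly_fac _ _ h n, Kf]
  congr 2
  refine Finset.sum_congr rfl fun k _ => ?_
  rw [← Complex.exp_nat_mul, ← Complex.exp_nat_mul]
  congr 2 <;> push_cast <;> ring

/-- The summand in the paired series for `theta1`. -/
def uterm (τ z : ℂ) (n : ℕ) : ℂ :=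
  Complex.exp ((Real.pi : ℂ) * Complex.I * τ * (n ^ 2 + n) + (Real.pi : ℂ) * Complex.I * n) * Kf z n

lemma pair_eq (τ z : ℂ) (n : ℕ) :
    tt τ z n + tt τ z (-(n + 1)) =
      ((Complex.exp ((Real.pi : ℂ) * Complex.I * z)
          - Complex.exp (-((Real.pi : ℂ) * Complex.I * z)))
        * (-Complex.I * Complex.exp ((Real.pi : ℂ) * Complex.I * τ / 4))) * uterm τ z n := by
  have hI : Complex.I = Complex.exp ((Real.pi : ℂ) * Complex.I / 2) := by
    have h0 : ((Real.pi : ℂ) * Complex.I / 2) = ((Real.pi / 2 : ℝ) : ℂ) * Complex.I := by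
      push_cast; ring
    rw [h0, Complex.exp_mul_I, ← Complex.ofReal_cos, ← Complex.ofReal_sin,
      Real.cos_pi_div_two, Real.sin_pi_div_two]
    simp
  have hp : ∀ w : ℂ, Complex.exp w ^ (2 * n + 1) = Complex.exp ((2 * (n : ℂ) + 1) * w) := by
    intro w
    rw [← Complex.exp_nat_mul]
    congr 1
    push_cast; ring
  have e1 : tt τ z (n : ℤ) =
      Complex.exp ((Real.pi : ℂ) * Complex.I * τ * ((n : ℂ) + 1 / 2) ^ 2
        + (Real.pi : ℂ) * Complex.I * ((n : ℂ) + 1) + (Real.pi : ℂ) * Complex.I / 2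
        + (2 * (n : ℂ) + 1) * ((Real.pi : ℂ) * Complex.I * z)) := by
    rw [tt, neg_cexp]
    exact cexp_eq_cexp _ _ 0 (by push_cast; ring)
  have e2 : tt τ z (-((n : ℤ) + 1)) =
      -Complex.exp ((Real.pi : ℂ) * Complex.I * τ * ((n : ℂ) + 1 / 2) ^ 2
        + (Real.pi : ℂ) * Complex.I * ((n : ℂ) + 1) + (Real.pi : ℂ) * Complex.I / 2
        + (2 * (n : ℂ) + 1) * (-((Real.pi : ℂ) * Complex.I * z))) := by
    rw [tt, neg_inj]
    exact cexp_eq_cexp _ _ (-((n : ℤ) + 1)) (by push_cast; ring)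
  have hI2 : -Complex.I = Complex.exp ((Real.pi : ℂ) * Complex.I * 3 / 2) := by
    rw [show (Real.pi : ℂ) * Complex.I * 3 / 2 = (Real.pi : ℂ) * Complex.I
      + (Real.pi : ℂ) * Complex.I / 2 by ring, Complex.exp_add, Complex.exp_pi_mul_I, ← hI]
    ring
  have f : ∀ w : ℂ, (Complex.exp ((Real.pi : ℂ) * Complex.I * 3 / 2) * Complex.exp ((Real.pi : ℂ) * Complex.I * τ / 4)
        * Complex.exp ((Real.pi : ℂ) * Complex.I * τ * ((n : ℂ) ^ 2 + (n : ℂ))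
          + (Real.pi : ℂ) * Complex.I * (n : ℂ))) * Complex.exp ((2 * (n : ℂ) + 1) * w)
      = Complex.exp ((Real.pi : ℂ) * Complex.I * τ * ((n : ℂ) + 1 / 2) ^ 2
        + (Real.pi : ℂ) * Complex.I * ((n : ℂ) + 1) + (Real.pi : ℂ) * Complex.I / 2
        + (2 * (n : ℂ) + 1) * w) := by
    intro w
    rw [← Complex.exp_add, ← Complex.exp_add, ← Complex.exp_add]
    exact cexp_eq_cexp _ _ 0 (by push_cast; ring)
  calc tt τ z (n : ℤ) + tt τ z (-((n : ℤ) + 1))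
      = Complex.exp ((Real.pi : ℂ) * Complex.I * τ * ((n : ℂ) + 1 / 2) ^ 2
          + (Real.pi : ℂ) * Complex.I * ((n : ℂ) + 1) + (Real.pi : ℂ) * Complex.I / 2
          + (2 * (n : ℂ) + 1) * ((Real.pi : ℂ) * Complex.I * z))
        - Complex.exp ((Real.pi : ℂ) * Complex.I * τ * ((n : ℂ) + 1 / 2) ^ 2
          + (Real.pi : ℂ) * Complex.I * ((n : ℂ) + 1) + (Real.pi : ℂ) * Complex.I / 2
          + (2 * (n : ℂ) + 1) * (-((Real.pi : ℂ) * Complex.I * z))) := by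
        rw [e1, e2]; ring
    _ = (-Complex.I * Complex.exp ((Real.pi : ℂ) * Complex.I * τ / 4)
          * Complex.exp ((Real.pi : ℂ) * Complex.I * τ * ((n : ℂ) ^ 2 + (n : ℂ))
            + (Real.pi : ℂ) * Complex.I * (n : ℂ)))
        * (Complex.exp ((2 * (n : ℂ) + 1) * ((Real.pi : ℂ) * Complex.I * z))
          - Complex.exp ((2 * (n : ℂ) + 1) * (-((Real.pi : ℂ) * Complex.I * z)))) := by
        rw [hI2, mul_sub, f, f]
    _ = (-Complex.I * Complex.exp ((Real.pi : ℂ) * Complex.I * τ / 4)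
          * Complex.exp ((Real.pi : ℂ) * Complex.I * τ * ((n : ℂ) ^ 2 + (n : ℂ))
            + (Real.pi : ℂ) * Complex.I * (n : ℂ)))
        * (Complex.exp ((Real.pi : ℂ) * Complex.I * z) ^ (2 * n + 1)
          - Complex.exp (-((Real.pi : ℂ) * Complex.I * z)) ^ (2 * n + 1)) := by
        rw [hp, hp]
    _ = _ := by rw [Kf_eq_pow, uterm]; ring

lemma norm_cexp (w : ℂ) : ‖Complex.exp w‖ = Real.exp w.re := Complex.norm_exp w

lemma two_mul_add_one_le (n : ℕ) : (2 * n + 1 : ℝ) ≤ 3 ^ n := by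
  induction n with
  | zero => norm_num
  | succ n ih =>
    have h3 : (0:ℝ) < 3 ^ n := by positivity
    push_cast at ih ⊢
    rw [pow_succ]
    nlinarith

lemma norm_Kf_le {τ : ℂ} (hτ : 0 < τ.im) {z : ℂ} (hz : |z.im| ≤ τ.im / 2) (n : ℕ) :
    ‖Kf z n‖ ≤ (2 * n + 1) * Real.exp (Real.pi * τ.im) ^ n := by
  have hM1 : (1:ℝ) ≤ Real.exp (Real.pi * τ.im) := by
    rw [Real.one_le_exp_iff]
    positivity
  have hMn : (1:ℝ) ≤ Real.exp (Real.pi * τ.im) ^ n := one_le_pow₀ hM1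
  have hterm : ∀ k ∈ Finset.range n,
      ‖Complex.exp (2 * (Real.pi : ℂ) * Complex.I * (k + 1) * z)
        + Complex.exp (-(2 * (Real.pi : ℂ) * Complex.I * (k + 1) * z))‖
      ≤ 2 * Real.exp (Real.pi * τ.im) ^ n := by
    intro k hk
    have hkn : (k:ℕ) + 1 ≤ n := Finset.mem_range.mp hk
    have hb : ∀ s : ℝ, |s| ≤ (k + 1 : ℝ) * (2 * Real.pi) * (τ.im / 2) →
        Real.exp s ≤ Real.exp (Real.pi * τ.im) ^ n := by
      intro s hs
      have h1 : s ≤ (k + 1 : ℝ) * (Real.pi * τ.im) := by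
        have := (abs_le.mp hs).2
        nlinarith [Real.pi_pos]
      calc Real.exp s ≤ Real.exp ((k + 1 : ℝ) * (Real.pi * τ.im)) := Real.exp_le_exp.mpr h1
        _ = Real.exp (Real.pi * τ.im) ^ (k + 1) := by
            rw [← Real.exp_nat_mul]; congr 1; push_cast; ring_nf
        _ ≤ Real.exp (Real.pi * τ.im) ^ n := pow_le_pow_right₀ hM1 hkn
    have hre1 : (2 * (Real.pi : ℂ) * Complex.I * ((k:ℂ) + 1) * z).re
        = -(2 * Real.pi * ((k:ℝ) + 1) * z.im) := by
      simp [Complex.mul_re, Complex.mul_im]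
      try ring
    have habs : |2 * Real.pi * ((k:ℝ) + 1) * z.im| ≤ (k + 1 : ℝ) * (2 * Real.pi) * (τ.im / 2) := by
      rw [abs_mul]
      have h2 : |2 * Real.pi * ((k:ℝ) + 1)| = 2 * Real.pi * ((k:ℝ) + 1) := by
        rw [_root_.abs_of_nonneg]; positivity
      rw [h2]
      calc 2 * Real.pi * ((k:ℝ) + 1) * |z.im| ≤ 2 * Real.pi * ((k:ℝ) + 1) * (τ.im / 2) := by
            apply mul_le_mul_of_nonneg_left hz; positivity
        _ = (k + 1 : ℝ) * (2 * Real.pi) * (τ.im / 2) := by ring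
      
    calc ‖Complex.exp (2 * (Real.pi : ℂ) * Complex.I * (k + 1) * z)
        + Complex.exp (-(2 * (Real.pi : ℂ) * Complex.I * (k + 1) * z))‖
        ≤ ‖Complex.exp (2 * (Real.pi : ℂ) * Complex.I * (k + 1) * z)‖
          + ‖Complex.exp (-(2 * (Real.pi : ℂ) * Complex.I * (k + 1) * z))‖ := norm_add_le _ _
      _ ≤ Real.exp (Real.pi * τ.im) ^ n + Real.exp (Real.pi * τ.im) ^ n := by
          gcongr
          · rw [norm_cexp]
            apply hb
            rw [hre1, abs_neg]
            exact habs
          · rw [norm_cexp, Complex.neg_re]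
            apply hb
            rw [hre1, neg_neg]
            exact habs
      _ = 2 * Real.exp (Real.pi * τ.im) ^ n := by ring
  calc ‖Kf z n‖ ≤ ‖(1:ℂ)‖ + ‖∑ k ∈ Finset.range n,
        (Complex.exp (2 * (Real.pi : ℂ) * Complex.I * (k + 1) * z)
          + Complex.exp (-(2 * (Real.pi : ℂ) * Complex.I * (k + 1) * z)))‖ := norm_add_le _ _
    _ ≤ 1 + ∑ k ∈ Finset.range n, 2 * Real.exp (Real.pi * τ.im) ^ n := by
        rw [norm_one]
        gcongr
        exact (norm_sum_le _ _).trans (Finset.sum_le_sum hterm)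
    _ = 1 + 2 * n * Real.exp (Real.pi * τ.im) ^ n := by
        rw [Finset.sum_const, Finset.card_range]
        push_cast; ring
    _ ≤ (2 * n + 1) * Real.exp (Real.pi * τ.im) ^ n := by nlinarith

lemma re_uterm_exp (τ : ℂ) (n : ℕ) :
    ((Real.pi : ℂ) * Complex.I * τ * ((n:ℂ) ^ 2 + (n:ℂ)) + (Real.pi : ℂ) * Complex.I * (n:ℂ)).re
      = -(Real.pi * τ.im * ((n:ℝ) ^ 2 + n)) := by
  have hc : ((n:ℂ) ^ 2 + (n:ℂ)) = ((n ^ 2 + n : ℕ) : ℂ) := by push_cast; ring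
  rw [hc]
  simp only [Complex.add_re, Complex.mul_re, Complex.mul_im, Complex.I_re, Complex.I_im,
    Complex.ofReal_re, Complex.ofReal_im, Complex.natCast_re, Complex.natCast_im]
  push_cast
  ring

lemma norm_uterm_le {τ : ℂ} (hτ : 0 < τ.im) {z : ℂ} (hz : |z.im| ≤ τ.im / 2) (n : ℕ) :
    ‖uterm τ z n‖ ≤ (3 * Real.exp (-(Real.pi * τ.im))) ^ n := by
  set ρ := Real.exp (-(Real.pi * τ.im)) with hρ
  have hρ0 : 0 < ρ := Real.exp_pos _
  have hρ1 : ρ ≤ 1 := Real.exp_le_one_iff.mpr (neg_nonpos.mpr (by positivity))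
  have hρR : ρ * Real.exp (Real.pi * τ.im) = 1 := by
    rw [hρ, ← Real.exp_add]; simp
  have h1 : Real.exp (-(Real.pi * τ.im * ((n:ℝ) ^ 2 + n))) = ρ ^ (n ^ 2 + n) := by
    rw [hρ, ← Real.exp_nat_mul]; congr 1; push_cast; ring
  have hKf := norm_Kf_le hτ hz n
  calc ‖uterm τ z n‖
      = Real.exp (-(Real.pi * τ.im * ((n:ℝ) ^ 2 + n))) * ‖Kf z n‖ := by
        rw [uterm, norm_mul, norm_cexp, re_uterm_exp]
    _ ≤ ρ ^ (n ^ 2 + n) * ((2 * n + 1) * Real.exp (Real.pi * τ.im) ^ n) := by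
        rw [h1]
        exact mul_le_mul_of_nonneg_left hKf (by positivity)
    _ = (2 * n + 1) * (ρ ^ (n ^ 2) * (ρ * Real.exp (Real.pi * τ.im)) ^ n) := by
        rw [mul_pow, pow_add]; ring
    _ = (2 * n + 1) * ρ ^ (n ^ 2) := by rw [hρR, one_pow, mul_one]
    _ ≤ 3 ^ n * ρ ^ n := by
        have hb1 := two_mul_add_one_le n
        have hb2 : ρ ^ (n ^ 2) ≤ ρ ^ n :=
          pow_le_pow_of_le_one hρ0.le hρ1 (Nat.le_self_pow two_ne_zero n)
        have h3 : (0:ℝ) ≤ 3 ^ n := by positivity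
        exact mul_le_mul hb1 hb2 (by positivity) h3
    _ = (3 * ρ) ^ n := (mul_pow _ _ _).symm

lemma rho_small {τ : ℂ} (h7 : 7 / 10 ≤ τ.im) : Real.exp (-(Real.pi * τ.im)) ≤ 2 / 13 := by
  have hπ : (21 : ℝ) / 10 ≤ Real.pi * τ.im := by nlinarith [Real.pi_gt_three]
  have h1 : Real.exp (-(Real.pi * τ.im)) ≤ Real.exp (-(21 / 10)) :=
    Real.exp_le_exp.mpr (by linarith)
  refine h1.trans ?_
  rw [Real.exp_neg]
  have h2 : (181 / 160 : ℝ) ≤ Real.exp (21 / 160) := by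
    have := Real.add_one_le_exp (21 / 160 : ℝ); linarith
  have h3 : ((181 : ℝ) / 160) ^ (16 : ℕ) ≤ Real.exp (21 / 160) ^ (16 : ℕ) :=
    pow_le_pow_left₀ (by norm_num) h2 16
  have h5 : (13 : ℝ) / 2 ≤ Real.exp (21 / 10) := by
    have he : Real.exp (21 / 10) = Real.exp (21 / 160) ^ (16 : ℕ) := by
      rw [← Real.exp_nat_mul]; norm_num
    rw [he]
    refine le_trans ?_ h3
    norm_num
  have h6 : (0:ℝ) < Real.exp (21 / 10) := Real.exp_pos _
  have := inv_anti₀ (by norm_num : (0:ℝ) < 13 / 2) h5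
  calc (Real.exp (21 / 10))⁻¹ ≤ ((13:ℝ)/2)⁻¹ := this
    _ = 2 / 13 := by norm_num

lemma uterm_zero (τ z : ℂ) : uterm τ z 0 = 1 := by
  simp [uterm, Kf]

/-- A series with head 1 and geometrically small tail is nonzero. -/
lemma tsum_head_ne (g : ℕ → ℂ) (hg0 : g 0 = 1) (r : ℝ) (hr0 : 0 ≤ r) (hr : r ≤ 6 / 13)
    (hb : ∀ n, ‖g n‖ ≤ r ^ n) : ∑' n, g n ≠ 0 := by
  have hrlt : r < 1 := by linarith
  have hnorm : Summable fun n => ‖g n‖ :=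
    Summable.of_nonneg_of_le (fun n => norm_nonneg _) hb (summable_geometric_of_lt_one hr0 hrlt)
  have hg : Summable g := hnorm.of_norm
  have h5 : ∑' n, g n = g 0 + ∑' n : ℕ, g (n + 1) := Summable.tsum_eq_zero_add hg
  have hnorm1 : Summable fun n : ℕ => ‖g (n + 1)‖ := by
    exact (summable_nat_add_iff 1).mpr hnorm
  have hgeo1 : Summable fun n : ℕ => r ^ (n + 1) := by
    exact (summable_nat_add_iff 1).mpr (summable_geometric_of_lt_one hr0 hrlt)
  have h6 : ‖∑' n : ℕ, g (n + 1)‖ ≤ 6 / 7 := by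
    calc ‖∑' n : ℕ, g (n + 1)‖ ≤ ∑' n : ℕ, ‖g (n + 1)‖ := norm_tsum_le_tsum_norm hnorm1
      _ ≤ ∑' n : ℕ, r ^ (n + 1) := Summable.tsum_le_tsum (fun n => hb (n + 1)) hnorm1 hgeo1
      _ = (1 - r)⁻¹ * r := by
          simp_rw [pow_succ]
          rw [tsum_mul_right, tsum_geometric_of_lt_one hr0 hrlt]
      _ ≤ 6 / 7 := by
          have hi : (1 - r)⁻¹ ≤ (7 / 13 : ℝ)⁻¹ := inv_anti₀ (by linarith) (by linarith)
          have hpos : (0:ℝ) < (1 - r)⁻¹ := by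
            rw [inv_pos]; linarith
          nlinarith
  intro h0
  rw [h0, hg0] at h5
  have h7 : ∑' n : ℕ, g (n + 1) = -1 := by linear_combination -h5
  rw [h7] at h6
  norm_num at h6

lemma Xsub_ne (z : ℂ) (hz : ∀ k : ℤ, z ≠ k) :
    Complex.exp ((Real.pi : ℂ) * Complex.I * z)
      - Complex.exp (-((Real.pi : ℂ) * Complex.I * z)) ≠ 0 := by
  intro h
  have h1 : Complex.exp ((Real.pi : ℂ) * Complex.I * z
      - -((Real.pi : ℂ) * Complex.I * z)) = 1 := by
    rw [Complex.exp_sub, sub_eq_zero.mp h, div_self (Complex.exp_ne_zero _)]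
  rw [Complex.exp_eq_one_iff] at h1
  obtain ⟨k, hk⟩ := h1
  have h2 : (2 * (Real.pi : ℂ) * Complex.I) * z = (2 * (Real.pi : ℂ) * Complex.I) * k := by
    linear_combination hk
  have h3 : (2 * (Real.pi : ℂ) * Complex.I) ≠ 0 := by
    refine mul_ne_zero (mul_ne_zero two_ne_zero ?_) Complex.I_ne_zero
    exact Complex.ofReal_ne_zero.mpr Real.pi_ne_zero
  exact hz k (mul_left_cancel₀ h3 h2)

lemma summable_uterm {τ : ℂ} (hτ : 0 < τ.im) (h7 : 7 / 10 ≤ τ.im) {z : ℂ}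
    (hz : |z.im| ≤ τ.im / 2) : Summable (uterm τ z) := by
  have hρ := rho_small h7
  have h3ρ : 3 * Real.exp (-(Real.pi * τ.im)) < 1 := by linarith [Real.exp_pos (-(Real.pi * τ.im))]
  exact Summable.of_norm_bounded
    (summable_geometric_of_lt_one (by positivity) h3ρ) (norm_uterm_le hτ hz)

lemma theta1_strip_eq {τ : ℂ} (hτ : 0 < τ.im) (h7 : 7 / 10 ≤ τ.im) {z : ℂ}
    (hz : |z.im| ≤ τ.im / 2) :
    theta1 τ z = ((Complex.exp ((Real.pi : ℂ) * Complex.I * z)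
        - Complex.exp (-((Real.pi : ℂ) * Complex.I * z)))
      * (-Complex.I * Complex.exp ((Real.pi : ℂ) * Complex.I * τ / 4)))
      * ∑' n : ℕ, uterm τ z n := by
  have h1 : HasSum (tt τ z) (theta1 τ z) := by
    rw [theta1_eq_tsum]; exact (summable_tt hτ z).hasSum
  have h2 := h1.nat_add_neg_add_one
  have h3 : HasSum (fun n : ℕ => ((Complex.exp ((Real.pi : ℂ) * Complex.I * z)
      - Complex.exp (-((Real.pi : ℂ) * Complex.I * z)))
      * (-Complex.I * Complex.exp ((Real.pi : ℂ) * Complex.I * τ / 4))) * uterm τ z n)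
      (theta1 τ z) := h2.congr_fun fun n => (pair_eq τ z n).symm
  have h4 := ((summable_uterm hτ h7 hz).hasSum).mul_left
    ((Complex.exp ((Real.pi : ℂ) * Complex.I * z)
      - Complex.exp (-((Real.pi : ℂ) * Complex.I * z)))
      * (-Complex.I * Complex.exp ((Real.pi : ℂ) * Complex.I * τ / 4)))
  exact h3.unique h4

lemma strip_ne {τ : ℂ} (hτ : 0 < τ.im) (h7 : 7 / 10 ≤ τ.im) {z : ℂ}
    (hzim : |z.im| ≤ τ.im / 2) (hzint : ∀ k : ℤ, z ≠ k) : theta1 τ z ≠ 0 := by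
  rw [theta1_strip_eq hτ h7 hzim]
  have hρ := rho_small h7
  refine mul_ne_zero (mul_ne_zero (Xsub_ne z hzint) ?_) ?_
  · exact mul_ne_zero (neg_ne_zero.mpr Complex.I_ne_zero) (Complex.exp_ne_zero _)
  · exact tsum_head_ne _ (uterm_zero τ z) _ (by positivity)
      (by linarith) (norm_uterm_le hτ hzim)

lemma theta1_ne_of_im_large {τ : ℂ} (hτ : 0 < τ.im) (h7 : 7 / 10 ≤ τ.im) {z : ℂ}
    (hz : z ∉ lat τ) : theta1 τ z ≠ 0 := by
  set n : ℤ := round (z.im / τ.im) with hn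
  have h0 : τ.im ≠ 0 := ne_of_gt hτ
  have him : |(z - (n : ℂ) * τ).im| ≤ τ.im / 2 := by
    have h1 : (z - (n : ℂ) * τ).im = (z.im / τ.im - (n : ℝ)) * τ.im := by
      simp [Complex.sub_im, Complex.mul_im]
      field_simp
    rw [h1, abs_mul, _root_.abs_of_pos hτ]
    have hv := abs_sub_round (z.im / τ.im)
    calc |z.im / τ.im - (n : ℝ)| * τ.im ≤ (1 / 2) * τ.im := by
          exact mul_le_mul_of_nonneg_right hv hτ.le
      _ = τ.im / 2 := by ring
  have hint : ∀ k : ℤ, z - (n : ℂ) * τ ≠ k := by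
    intro k hk
    exact hz ⟨k, n, by linear_combination hk⟩
  have hne := strip_ne hτ h7 him hint
  have hzz : z = (z - (n : ℂ) * τ) + (n : ℂ) * τ := by ring
  rw [hzz, theta1_add_int_mul]
  exact mul_ne_zero (Complex.exp_ne_zero _) hne

/-- summand of paired series for `jacobiTheta₂' (1/2+τ/2)` -/
def vterm (τ : ℂ) (n : ℕ) : ℂ :=
  (2 * (n : ℂ) + 1) * Complex.exp ((Real.pi : ℂ) * Complex.I * τ * ((n : ℂ) ^ 2 + (n : ℂ))
    + (Real.pi : ℂ) * Complex.I * (n : ℂ))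

lemma vterm_zero (τ : ℂ) : vterm τ 0 = 1 := by simp [vterm]

lemma norm_vterm_le {τ : ℂ} (hτ : 0 < τ.im) (n : ℕ) :
    ‖vterm τ n‖ ≤ (3 * Real.exp (-(Real.pi * τ.im))) ^ n := by
  set ρ := Real.exp (-(Real.pi * τ.im)) with hρ
  have hρ0 : 0 < ρ := Real.exp_pos _
  have hρ1 : ρ ≤ 1 := Real.exp_le_one_iff.mpr (neg_nonpos.mpr (by positivity))
  have hcast : (2 * (n : ℂ) + 1) = ((2 * n + 1 : ℕ) : ℂ) := by push_cast; ring
  have h1 : Real.exp (-(Real.pi * τ.im * ((n : ℝ) ^ 2 + n))) = ρ ^ (n ^ 2 + n) := by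
    rw [hρ, ← Real.exp_nat_mul]; congr 1; push_cast; ring
  rw [vterm, norm_mul, norm_cexp, re_uterm_exp, hcast, Complex.norm_natCast, h1]
  calc (↑(2 * n + 1) : ℝ) * ρ ^ (n ^ 2 + n) ≤ 3 ^ n * ρ ^ n := by
        have hb1 := two_mul_add_one_le n
        have hb2 : ρ ^ (n ^ 2 + n) ≤ ρ ^ n :=
          pow_le_pow_of_le_one hρ0.le hρ1 (by nlinarith [Nat.le_self_pow two_ne_zero n])
        push_cast
        exact mul_le_mul hb1 hb2 (by positivity) (by positivity)
    _ = (3 * ρ) ^ n := (mul_pow _ _ _).symm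

lemma pairv (τ : ℂ) (n : ℕ) :
    jacobiTheta₂'_term (n : ℤ) (1 / 2 + τ / 2) τ
      + jacobiTheta₂'_term (-((n : ℤ) + 1)) (1 / 2 + τ / 2) τ
      = (2 * (Real.pi : ℂ) * Complex.I) * vterm τ n := by
  simp only [jacobiTheta₂'_term, jacobiTheta₂_term]
  have hn : Complex.exp (2 * (Real.pi : ℂ) * Complex.I * (((n : ℤ) : ℂ)) * (1 / 2 + τ / 2)
      + (Real.pi : ℂ) * Complex.I * (((n : ℤ) : ℂ)) ^ 2 * τ)
      = Complex.exp ((Real.pi : ℂ) * Complex.I * τ * ((n : ℂ) ^ 2 + (n : ℂ))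
        + (Real.pi : ℂ) * Complex.I * (n : ℂ)) :=
    cexp_eq_cexp _ _ 0 (by push_cast; ring)
  have hm : Complex.exp (2 * (Real.pi : ℂ) * Complex.I * (((-((n : ℤ) + 1) : ℤ)) : ℂ) * (1 / 2 + τ / 2)
      + (Real.pi : ℂ) * Complex.I * (((-((n : ℤ) + 1) : ℤ)) : ℂ) ^ 2 * τ)
      = -Complex.exp ((Real.pi : ℂ) * Complex.I * τ * ((n : ℂ) ^ 2 + (n : ℂ))
        + (Real.pi : ℂ) * Complex.I * (n : ℂ)) := by
    rw [neg_cexp]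
    exact cexp_eq_cexp _ _ (-((n : ℤ) + 1)) (by push_cast; ring)
  rw [hn, hm, vterm]
  push_cast
  ring

lemma summable_vterm {τ : ℂ} (hτ : 0 < τ.im) (h7 : 7 / 10 ≤ τ.im) : Summable (vterm τ) := by
  have hρ := rho_small h7
  have h3ρ : 3 * Real.exp (-(Real.pi * τ.im)) < 1 := by linarith [Real.exp_pos (-(Real.pi * τ.im))]
  exact Summable.of_norm_bounded
    (summable_geometric_of_lt_one (by positivity) h3ρ) (norm_vterm_le hτ)

lemma jacobiTheta2'_val {τ : ℂ} (hτ : 0 < τ.im) (h7 : 7 / 10 ≤ τ.im) :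
    jacobiTheta₂' (1 / 2 + τ / 2) τ = (2 * (Real.pi : ℂ) * Complex.I) * ∑' n : ℕ, vterm τ n := by
  have h1 := (hasSum_jacobiTheta₂'_term (1 / 2 + τ / 2) hτ).nat_add_neg_add_one
  have h2 : HasSum (fun n : ℕ => (2 * (Real.pi : ℂ) * Complex.I) * vterm τ n)
      (jacobiTheta₂' (1 / 2 + τ / 2) τ) := h1.congr_fun fun n => (pairv τ n).symm
  exact h2.unique (((summable_vterm hτ h7).hasSum).mul_left _)

lemma jacobiTheta2'_ne {τ : ℂ} (hτ : 0 < τ.im) (h7 : 7 / 10 ≤ τ.im) :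
    jacobiTheta₂' (1 / 2 + τ / 2) τ ≠ 0 := by
  rw [jacobiTheta2'_val hτ h7]
  have hρ := rho_small h7
  refine mul_ne_zero ?_ (tsum_head_ne _ (vterm_zero τ) _ (by positivity) (by linarith)
    (norm_vterm_le hτ))
  refine mul_ne_zero (mul_ne_zero two_ne_zero ?_) Complex.I_ne_zero
  exact Complex.ofReal_ne_zero.mpr Real.pi_ne_zero

lemma theta1_differentiableAt {τ : ℂ} (hτ : 0 < τ.im) (x : ℂ) :
    DifferentiableAt ℂ (theta1 τ) x := by
  have hfun : theta1 τ = fun z => -(Complex.exp ((Real.pi : ℂ) * Complex.I * (z + 1 / 2 + τ / 4)) *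
      jacobiTheta₂ (z + 1 / 2 + τ / 2) τ) := funext fun z => theta1_eq_jacobi τ z
  rw [hfun]
  refine DifferentiableAt.neg (DifferentiableAt.mul (by fun_prop) ?_)
  have houter := differentiableAt_jacobiTheta₂_fst (x + 1 / 2 + τ / 2) hτ
  exact houter.comp (f := fun z : ℂ => z + 1 / 2 + τ / 2) x (by fun_prop)

lemma jacobiTheta2_half_zero {τ : ℂ} (hτ : 0 < τ.im) :
    jacobiTheta₂ ((0 : ℂ) + 1 / 2 + τ / 2) τ = 0 := by
  have h0 := theta1_zero τ
  rw [theta1_eq_jacobi] at h0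
  rcases mul_eq_zero.mp (neg_eq_zero.mp h0) with h | h
  · exact absurd h (Complex.exp_ne_zero _)
  · exact h

lemma deriv_theta1_ne_of_im_large {τ : ℂ} (hτ : 0 < τ.im) (h7 : 7 / 10 ≤ τ.im) :
    deriv (theta1 τ) 0 ≠ 0 := by
  have hfun : theta1 τ = fun z => -(Complex.exp ((Real.pi : ℂ) * Complex.I * (z + 1 / 2 + τ / 4)) *
      jacobiTheta₂ (z + 1 / 2 + τ / 2) τ) := funext fun z => theta1_eq_jacobi τ z
  have hc : HasDerivAt (fun z : ℂ => Complex.exp ((Real.pi : ℂ) * Complex.I * (z + 1 / 2 + τ / 4)))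
      ((Real.pi : ℂ) * Complex.I
        * Complex.exp ((Real.pi : ℂ) * Complex.I * ((0 : ℂ) + 1 / 2 + τ / 4))) 0 := by
    have h1 : HasDerivAt (fun z : ℂ => (Real.pi : ℂ) * Complex.I * (z + 1 / 2 + τ / 4))
        ((Real.pi : ℂ) * Complex.I) 0 := by
      simpa using (((hasDerivAt_id (0 : ℂ)).add_const ((1 : ℂ) / 2)).add_const (τ / 4)).const_mul
        ((Real.pi : ℂ) * Complex.I)
    simpa [mul_comm] using h1.cexp
  have hj : HasDerivAt (fun z : ℂ => jacobiTheta₂ (z + 1 / 2 + τ / 2) τ)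
      (jacobiTheta₂' ((0 : ℂ) + 1 / 2 + τ / 2) τ) 0 := by
    have houter := hasDerivAt_jacobiTheta₂_fst ((0 : ℂ) + 1 / 2 + τ / 2) hτ
    have hinner : HasDerivAt (fun z : ℂ => z + 1 / 2 + τ / 2) 1 0 := by
      simpa using ((hasDerivAt_id (0 : ℂ)).add_const ((1 : ℂ) / 2)).add_const (τ / 2)
    have hcomp := houter.comp 0 hinner
    rw [mul_one] at hcomp
    exact hcomp
  have hD := (hc.mul hj).neg
  rw [jacobiTheta2_half_zero hτ, mul_zero, zero_add] at hD
  rw [hfun]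
  erw [hD.deriv]
  have harg : (0 : ℂ) + 1 / 2 + τ / 2 = 1 / 2 + τ / 2 := by ring
  rw [harg]
  refine neg_ne_zero.mpr (mul_ne_zero (Complex.exp_ne_zero _) (jacobiTheta2'_ne hτ h7))

/-! ### the S transformation -/

lemma theta1_S {τ : ℂ} (hτ : 0 < τ.im) (z : ℂ) :
    theta1 (-1 / τ) z
      = -((1 / (-Complex.I * (-1 / τ)) ^ ((1 : ℂ) / 2))
          * (Complex.exp ((Real.pi : ℂ) * Complex.I * (z + 1 / 2 + (-1 / τ) / 4))
            * Complex.exp (-(Real.pi : ℂ) * Complex.I * (z + 1 / 2 + (-1 / τ) / 2) ^ 2 / (-1 / τ))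
            * Complex.exp (-((Real.pi : ℂ) * Complex.I * (τ * z - 1 + 1 / 2 + τ / 4)))
            * theta1 τ (τ * z))) := by
  have hτ0 : τ ≠ 0 := fun h => by simp [h] at hτ
  have hσ0 : (-1 / τ) ≠ 0 := div_ne_zero (neg_ne_zero.mpr one_ne_zero) hτ0
  have hστ : -1 / (-1 / τ) = τ := by field_simp
  have hw : (z + 1 / 2 + (-1 / τ) / 2) / (-1 / τ) = -(τ * (z + 1 / 2 + (-1 / τ) / 2)) := by
    field_simp
  have harg : τ * (z + 1 / 2 + (-1 / τ) / 2) = (τ * z - 1) + 1 / 2 + τ / 2 := by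
    field_simp
    ring
  have hbr := theta1_eq_jacobi τ (τ * z - 1)
  have hΘval : jacobiTheta₂ ((τ * z - 1) + 1 / 2 + τ / 2) τ
      = -(Complex.exp (-((Real.pi : ℂ) * Complex.I * (τ * z - 1 + 1 / 2 + τ / 4)))
          * theta1 τ (τ * z - 1)) := by
    rw [hbr, show ∀ A B : ℂ, -(Complex.exp (-A) * -(Complex.exp A * B))
      = (Complex.exp (-A) * Complex.exp A) * B from fun A B => by ring, ← Complex.exp_add]
    simp
  have hsh : theta1 τ (τ * z - 1) = -theta1 τ (τ * z) := by
    have h1 : theta1 τ (τ * z + ((-1 : ℤ) : ℂ))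
        = Complex.exp ((Real.pi : ℂ) * Complex.I * ((-1 : ℤ) : ℂ)) * theta1 τ (τ * z) :=
      theta1_add_int τ (τ * z) (-1)
    have h2 : Complex.exp ((Real.pi : ℂ) * Complex.I * ((-1 : ℤ) : ℂ)) = -1 := by
      push_cast
      rw [show (Real.pi : ℂ) * Complex.I * (-1) = -((Real.pi : ℂ) * Complex.I) by ring,
        Complex.exp_neg, Complex.exp_pi_mul_I]
      norm_num
    rw [show τ * z - 1 = τ * z + ((-1 : ℤ) : ℂ) by push_cast; ring, h1, h2]
    ring
  calc theta1 (-1 / τ) z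
      = -(Complex.exp ((Real.pi : ℂ) * Complex.I * (z + 1 / 2 + (-1 / τ) / 4)) *
          jacobiTheta₂ (z + 1 / 2 + (-1 / τ) / 2) (-1 / τ)) := theta1_eq_jacobi _ z
    _ = -(Complex.exp ((Real.pi : ℂ) * Complex.I * (z + 1 / 2 + (-1 / τ) / 4)) *
          (1 / (-Complex.I * (-1 / τ)) ^ ((1 : ℂ) / 2)
            * Complex.exp (-(Real.pi : ℂ) * Complex.I * (z + 1 / 2 + (-1 / τ) / 2) ^ 2 / (-1 / τ))
            * jacobiTheta₂ ((z + 1 / 2 + (-1 / τ) / 2) / (-1 / τ)) (-1 / (-1 / τ)))) := by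
        rw [← jacobiTheta₂_functional_equation]
    _ = _ := by
        rw [hw, jacobiTheta₂_neg_left, hστ, harg, hΘval, hsh]
        ring

/-! ### lattice transport -/

lemma lat_T (τ : ℂ) (k : ℤ) : lat (τ + k) = lat τ := by
  ext w
  constructor
  · rintro ⟨m, n, rfl⟩
    exact ⟨m + n * k, n, by push_cast; ring⟩
  · rintro ⟨m, n, rfl⟩
    exact ⟨m - n * k, n, by push_cast; ring⟩

lemma lat_S {τ : ℂ} (hτ0 : τ ≠ 0) {z : ℂ} (hz : z ∉ lat (-1 / τ)) : τ * z ∉ lat τ := by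
  rintro ⟨m, n, hmn⟩
  refine hz ⟨n, -m, ?_⟩
  push_cast
  field_simp
  linear_combination hmn

/-! ### the good predicate and descent -/

def good (τ : ℂ) : Prop :=
  (∀ z, z ∉ lat τ → theta1 τ z ≠ 0) ∧ deriv (theta1 τ) 0 ≠ 0

lemma good_of_im_large {τ : ℂ} (hτ : 0 < τ.im) (h7 : 7 / 10 ≤ τ.im) : good τ :=
  ⟨fun _ hz => theta1_ne_of_im_large hτ h7 hz, deriv_theta1_ne_of_im_large hτ h7⟩

lemma good_T {τ : ℂ} (k : ℤ) (h : good τ) : good (τ + k) := by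
  have hfun : theta1 (τ + k)
      = fun z => Complex.exp ((Real.pi : ℂ) * Complex.I * k / 4) * theta1 τ z :=
    funext fun z => theta1_T τ z k
  constructor
  · intro z hz
    rw [hfun]
    exact mul_ne_zero (Complex.exp_ne_zero _) (h.1 z ((lat_T τ k) ▸ hz))
  · rw [hfun, deriv_const_mul_field]
    exact mul_ne_zero (Complex.exp_ne_zero _) h.2

lemma im_neg_inv {τ : ℂ} (hτ : 0 < τ.im) : 0 < (-1 / τ).im := by
  have hτ0 : τ ≠ 0 := fun h => by simp [h] at hτ
  rw [div_eq_mul_inv, neg_one_mul, Complex.neg_im, Complex.inv_im, neg_div, neg_neg]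
  exact div_pos hτ (Complex.normSq_pos.mpr hτ0)

lemma good_S {τ : ℂ} (hτ : 0 < τ.im) (h : good τ) : good (-1 / τ) := by
  have hτ0 : τ ≠ 0 := fun h' => by simp [h'] at hτ
  have hσ0 : (-1 / τ) ≠ 0 := div_ne_zero (neg_ne_zero.mpr one_ne_zero) hτ0
  have hCne : (1 / (-Complex.I * (-1 / τ)) ^ ((1 : ℂ) / 2)) ≠ 0 := by
    refine one_div_ne_zero ?_
    rw [Ne, Complex.cpow_eq_zero_iff]
    push_neg
    intro hc
    exact absurd hc (mul_ne_zero (neg_ne_zero.mpr Complex.I_ne_zero) hσ0)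
  constructor
  · intro z hz
    rw [theta1_S hτ z]
    refine neg_ne_zero.mpr (mul_ne_zero hCne ?_)
    refine mul_ne_zero (mul_ne_zero (mul_ne_zero (Complex.exp_ne_zero _)
      (Complex.exp_ne_zero _)) (Complex.exp_ne_zero _)) ?_
    exact h.1 _ (lat_S hτ0 hz)
  · -- derivative transport
    have hfun : theta1 (-1 / τ) = fun z =>
        -((1 / (-Complex.I * (-1 / τ)) ^ ((1 : ℂ) / 2))
          * (Complex.exp ((Real.pi : ℂ) * Complex.I * (z + 1 / 2 + (-1 / τ) / 4))
            * Complex.exp (-(Real.pi : ℂ) * Complex.I * (z + 1 / 2 + (-1 / τ) / 2) ^ 2 / (-1 / τ))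
            * Complex.exp (-((Real.pi : ℂ) * Complex.I * (τ * z - 1 + 1 / 2 + τ / 4)))
            * theta1 τ (τ * z))) := funext fun z => theta1_S hτ z
    have hg : DifferentiableAt ℂ (fun z : ℂ =>
        Complex.exp ((Real.pi : ℂ) * Complex.I * (z + 1 / 2 + (-1 / τ) / 4))
          * Complex.exp (-(Real.pi : ℂ) * Complex.I * (z + 1 / 2 + (-1 / τ) / 2) ^ 2 / (-1 / τ))
          * Complex.exp (-((Real.pi : ℂ) * Complex.I * (τ * z - 1 + 1 / 2 + τ / 4)))) 0 := by
      fun_prop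
    have hgd := hg.hasDerivAt
    have hθd : HasDerivAt (fun z : ℂ => theta1 τ (τ * z)) (deriv (theta1 τ) 0 * τ) 0 := by
      have houter : HasDerivAt (theta1 τ) (deriv (theta1 τ) 0) (τ * 0) := by
        rw [mul_zero]
        exact (theta1_differentiableAt hτ 0).hasDerivAt
      have hinner : HasDerivAt (fun z : ℂ => τ * z) τ 0 := by
        simpa using (hasDerivAt_id (0 : ℂ)).const_mul τ
      exact houter.comp 0 hinner
    have hprod := ((hgd.mul hθd).const_mul
      (1 / (-Complex.I * (-1 / τ)) ^ ((1 : ℂ) / 2))).neg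
    rw [hfun]
    erw [hprod.deriv]
    have hz0 : theta1 τ (τ * 0) = 0 := by rw [mul_zero, theta1_zero]
    rw [hz0, mul_zero, zero_add]
    refine neg_ne_zero.mpr (mul_ne_zero hCne (mul_ne_zero ?_ (mul_ne_zero h.2 hτ0)))
    exact mul_ne_zero (mul_ne_zero (Complex.exp_ne_zero _) (Complex.exp_ne_zero _))
      (Complex.exp_ne_zero _)

lemma good_all {τ : ℂ} (hτ : 0 < τ.im) : good τ := by
  suffices H : ∀ n : ℕ, ∀ τ : ℂ, 0 < τ.im → 7 / 10 ≤ τ.im * (50 / 37) ^ n → good τ by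
    obtain ⟨n, hn⟩ := pow_unbounded_of_one_lt ((7 / 10) / τ.im) (by norm_num : (1:ℝ) < 50 / 37)
    refine H n τ hτ ?_
    rw [div_lt_iff₀ hτ] at hn
    nlinarith
  intro n
  induction n with
  | zero =>
    intro τ hτ h
    rw [pow_zero, mul_one] at h
    exact good_of_im_large hτ h
  | succ n ih =>
    intro τ hτ h
    by_cases h7 : 7 / 10 ≤ τ.im
    · exact good_of_im_large hτ h7
    push_neg at h7
    set k : ℤ := round τ.re with hk
    set τ₀ : ℂ := τ - k with hτ₀
    have hτ₀im : τ₀.im = τ.im := by simp [hτ₀]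
    have hτ₀re : |τ₀.re| ≤ 1 / 2 := by
      simp only [hτ₀, Complex.sub_re, Complex.intCast_re]
      exact abs_sub_round τ.re
    have hτ₀im' : 0 < τ₀.im := by rw [hτ₀im]; exact hτ
    have hτ₀0 : τ₀ ≠ 0 := fun h' => by
      rw [h'] at hτ₀im'; simp at hτ₀im'
    have hns : Complex.normSq τ₀ ≤ 37 / 50 := by
      rw [Complex.normSq_apply]
      have h1 : τ₀.re ^ 2 ≤ 1 / 4 := by
        have := abs_le.mp hτ₀re
        nlinarith
      have h2 : τ₀.im ^ 2 ≤ (7 / 10) ^ 2 := by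
        rw [hτ₀im]
        nlinarith
      nlinarith
    set σ : ℂ := -1 / τ₀ with hσ
    have hσim : σ.im = τ₀.im / Complex.normSq τ₀ := by
      rw [hσ, div_eq_mul_inv, neg_one_mul, Complex.neg_im, Complex.inv_im, neg_div, neg_neg]
    have hσpos : 0 < σ.im := by
      rw [hσim]
      exact div_pos hτ₀im' (Complex.normSq_pos.mpr hτ₀0)
    have hgrow : τ.im * (50 / 37) ≤ σ.im := by
      rw [hσim, hτ₀im]
      rw [le_div_iff₀ (Complex.normSq_pos.mpr hτ₀0)]
      nlinarith
    have hgood_σ : good σ := by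
      refine ih σ hσpos ?_
      have hpow : (0:ℝ) < (50 / 37) ^ n := by positivity
      calc (7:ℝ) / 10 ≤ τ.im * (50 / 37) ^ (n + 1) := h
        _ = (τ.im * (50 / 37)) * (50 / 37) ^ n := by ring
        _ ≤ σ.im * (50 / 37) ^ n := by nlinarith
    have hgood_τ₀ : good τ₀ := by
      have h1 := good_S hσpos hgood_σ
      have h2 : -1 / σ = τ₀ := by rw [hσ]; field_simp
      rwa [h2] at h1
    have h3 : τ₀ + (k : ℂ) = τ := by rw [hτ₀]; ring
    have h4 := good_T k hgood_τ₀
    rwa [h3] at h4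

end ThetaAux

namespace ThetaAux

lemma sigma_abstract (a b c e f g h i j k l m d : ℂ)
    (hf : f ≠ 0) (hj : j ≠ 0) (hk : k ≠ 0) (hh : h ≠ 0) (hc : c ≠ 0) (he : e ≠ 0)
    (Q : a * e * b * c = f * g * h * i + j * k * l * m) :
    a * d / (f * -k) * (b * d / (j * -h))
      - i * d / (j * -c) * (g * d / (e * -k))
      - -m * d / (-e * -h) * (l * d / (f * -c)) = 0 := by
  field_simp
  linear_combination d ^ 2 * Q

end ThetaAux


theorem sigma_three_term_identity
    (τ : ℂ) (hτ : 0 < τ.im) (lam mu z w : ℂ)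
    (hlam : lam ∉ lat τ) (hmu : mu ∉ lat τ) (hlm : lam + mu ∉ lat τ)
    (hz : z ∉ lat τ) (hw : w ∉ lat τ) (hzw : z - w ∉ lat τ) :
    sigmaFn τ lam z * sigmaFn τ mu w
      - sigmaFn τ (lam + mu) w * sigmaFn τ lam (z - w)
      - sigmaFn τ mu (w - z) * sigmaFn τ (lam + mu) z = 0 := by
  obtain ⟨hnz, hd⟩ := ThetaAux.good_all hτ
  have t1 : theta1 τ z ≠ 0 := hnz z hz
  have t2 : theta1 τ w ≠ 0 := hnz w hw
  have t3 : theta1 τ lam ≠ 0 := hnz lam hlam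
  have t4 : theta1 τ mu ≠ 0 := hnz mu hmu
  have t5 : theta1 τ (lam + mu) ≠ 0 := hnz _ hlm
  have t6 : theta1 τ (z - w) ≠ 0 := hnz _ hzw
  have o1 : theta1 τ (-lam) = -theta1 τ lam := ThetaAux.theta1_neg τ lam
  have o2 : theta1 τ (-mu) = -theta1 τ mu := ThetaAux.theta1_neg τ mu
  have o3 : theta1 τ (-(lam + mu)) = -theta1 τ (lam + mu) := ThetaAux.theta1_neg τ (lam + mu)
  have o4 : theta1 τ (w - z) = -theta1 τ (z - w) := by
    rw [show w - z = -(z - w) by ring, ThetaAux.theta1_neg]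
  have o5 : theta1 τ (w - z - mu) = -theta1 τ (z - w + mu) := by
    rw [show w - z - mu = -(z - w + mu) by ring, ThetaAux.theta1_neg]
  have Q := ThetaAux.quartic hτ z w lam mu
  rw [show w - lam - mu = w - (lam + mu) by ring, show z - lam - mu = z - (lam + mu) by ring] at Q
  unfold sigmaFn
  rw [o1, o2, o3, o4, o5]
  exact ThetaAux.sigma_abstract _ _ _ _ _ _ _ _ _ _ _ _ _ t1 t2 t3 t4 t5 t6 Q
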